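/- For all integers s, t ≥ 3, the graph X(s,t) is 3-connected; that is, it has more than 3 vertices and remains connected after the deletion of any set of at most 2 vertices. -/
import Mathlib


/-- The number of proper colorings of `G` with a palette of `k` colors. -/
noncomputable def numColorings {V : Type} [Fintype V] (G : SimpleGraph V) (k : ℕ) : ℕ :=
  Nat.card {f : V → Fin k // ∀ u v, G.Adj u v → f u ≠ f v}

/-- `P` is the chromatic polynomial of `G`: for every natural number `k`, evaluating `P`
at `k` gives the number of proper `k`-colorings of `G`. -/
def IsChromaticPolynomial {V : Type} [Fintype V] (G : SimpleGraph V) (P : Polynomial ℝ) : Prop :=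
  ∀ k : ℕ, P.eval (k : ℝ) = numColorings G k

/-- The adjacency-generating relation of the graph `X(s,t)`: the vertices `v0, v1, v2, v3, v4`
are `Sum.inl 0, …, Sum.inl 4`, the independent set `S` is `Fin s` (as `Sum.inr (Sum.inl _)`)
and the independent set `T` is `Fin t` (as `Sum.inr (Sum.inr _)`).  The edges are: `v1v2`,
`v3v4`, every vertex of `S` joined to each of `v0, v1, v3`, and every vertex of `T` joined
to each of `v0, v2, v4`. -/
def XAdj (s t : ℕ) (x y : Fin 5 ⊕ Fin s ⊕ Fin t) : Prop :=
  (x = Sum.inl 1 ∧ y = Sum.inl 2) ∨ (x = Sum.inl 3 ∧ y = Sum.inl 4) ∨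
    ((∃ i : Fin s, x = Sum.inr (Sum.inl i)) ∧ (y = Sum.inl 0 ∨ y = Sum.inl 1 ∨ y = Sum.inl 3)) ∨
    ((∃ j : Fin t, x = Sum.inr (Sum.inr j)) ∧ (y = Sum.inl 0 ∨ y = Sum.inl 2 ∨ y = Sum.inl 4))

/-- The graph `X(s,t)`. -/
def graphX (s t : ℕ) : SimpleGraph (Fin 5 ⊕ Fin s ⊕ Fin t) :=
  SimpleGraph.fromRel (XAdj s t)

lemma adjS {s t : ℕ} (i : Fin s) (k : Fin 5) (hk : k = 0 ∨ k = 1 ∨ k = 3) :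
    (graphX s t).Adj (Sum.inr (Sum.inl i)) (Sum.inl k) := by
  refine ⟨by simp, Or.inl ?_⟩
  exact Or.inr (Or.inr (Or.inl ⟨⟨i, rfl⟩, by rcases hk with h|h|h <;> simp [h]⟩))

lemma adjT {s t : ℕ} (j : Fin t) (k : Fin 5) (hk : k = 0 ∨ k = 2 ∨ k = 4) :
    (graphX s t).Adj (Sum.inr (Sum.inr j)) (Sum.inl k) := by
  refine ⟨by simp, Or.inl ?_⟩
  exact Or.inr (Or.inr (Or.inr ⟨⟨j, rfl⟩, by rcases hk with h|h|h <;> simp [h]⟩))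

lemma adj12 {s t : ℕ} : (graphX s t).Adj (Sum.inl 1) (Sum.inl 2) :=
  ⟨by simp, Or.inl (Or.inl ⟨rfl, rfl⟩)⟩

lemma adj34 {s t : ℕ} : (graphX s t).Adj (Sum.inl 3) (Sum.inl 4) :=
  ⟨by simp, Or.inl (Or.inr (Or.inl ⟨rfl, rfl⟩))⟩

/-- For all `s, t ≥ 3`, the graph `X(s,t)` is 3-connected: it has more than 3 vertices and
remains connected after the deletion of any set of at most 2 vertices. -/
theorem graphX_three_connected (s t : ℕ) (hs : 3 ≤ s) (ht : 3 ≤ t) :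
    3 < Fintype.card (Fin 5 ⊕ Fin s ⊕ Fin t) ∧
    ∀ W : Finset (Fin 5 ⊕ Fin s ⊕ Fin t), W.card ≤ 2 →
      ((graphX s t).induce ((W : Set (Fin 5 ⊕ Fin s ⊕ Fin t))ᶜ)).Connected := by
  constructor
  · simp only [Fintype.card_sum, Fintype.card_fin]
    omega
  intro W hW
  set U : Set (Fin 5 ⊕ Fin s ⊕ Fin t) := (↑W)ᶜ with hU
  set G' := (graphX s t).induce U with hG'
  have haS : ∃ i : Fin s, (Sum.inr (Sum.inl i) : Fin 5 ⊕ Fin s ⊕ Fin t) ∉ W := by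
    by_contra h
    push_neg at h
    have hsub : (Finset.univ.image
        (fun i : Fin s => (Sum.inr (Sum.inl i) : Fin 5 ⊕ Fin s ⊕ Fin t))) ⊆ W := by
      intro x hx
      simp only [Finset.mem_image] at hx
      obtain ⟨i, _, rfl⟩ := hx
      exact h i
    have hc := Finset.card_le_card hsub
    rw [Finset.card_image_of_injective _ (fun a b hab => by simpa using hab),
      Finset.card_univ, Fintype.card_fin] at hc
    omega
  have hbT : ∃ j : Fin t, (Sum.inr (Sum.inr j) : Fin 5 ⊕ Fin s ⊕ Fin t) ∉ W := by
    by_contra h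
    push_neg at h
    have hsub : (Finset.univ.image
        (fun j : Fin t => (Sum.inr (Sum.inr j) : Fin 5 ⊕ Fin s ⊕ Fin t))) ⊆ W := by
      intro x hx
      simp only [Finset.mem_image] at hx
      obtain ⟨j, _, rfl⟩ := hx
      exact h j
    have hc := Finset.card_le_card hsub
    rw [Finset.card_image_of_injective _ (fun a b hab => by simpa using hab),
      Finset.card_univ, Fintype.card_fin] at hc
    omega
  obtain ⟨a, ha⟩ := haS
  obtain ⟨b, hb⟩ := hbT
  have haU : (Sum.inr (Sum.inl a) : Fin 5 ⊕ Fin s ⊕ Fin t) ∈ U := ha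
  have hbU : (Sum.inr (Sum.inr b) : Fin 5 ⊕ Fin s ⊕ Fin t) ∈ U := hb
  have step : ∀ (x y : U), (graphX s t).Adj x.1 y.1 → G'.Reachable x y := by
    intro x y h
    exact SimpleGraph.Adj.reachable h
  have three : ∀ (u v w : Fin 5 ⊕ Fin s ⊕ Fin t), u ≠ v → u ≠ w → v ≠ w →
      (u ∉ W ∨ v ∉ W ∨ w ∉ W) := by
    intro u v w huv huw hvw
    by_contra h
    push_neg at h
    obtain ⟨h1, h2, h3⟩ := h
    have hsub : ({u, v, w} : Finset (Fin 5 ⊕ Fin s ⊕ Fin t)) ⊆ W := by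
      intro x hx
      simp only [Finset.mem_insert, Finset.mem_singleton] at hx
      rcases hx with rfl|rfl|rfl <;> assumption
    have hc := Finset.card_le_card hsub
    rw [Finset.card_insert_of_notMem (by simp [huv, huw]),
      Finset.card_insert_of_notMem (by simp [hvw]), Finset.card_singleton] at hc
    omega
  have ne01 : (Sum.inl 0 : Fin 5 ⊕ Fin s ⊕ Fin t) ≠ Sum.inl 1 := fun h => absurd (Sum.inl.inj h) (by decide)
  have ne02 : (Sum.inl 0 : Fin 5 ⊕ Fin s ⊕ Fin t) ≠ Sum.inl 2 := fun h => absurd (Sum.inl.inj h) (by decide)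
  have ne03 : (Sum.inl 0 : Fin 5 ⊕ Fin s ⊕ Fin t) ≠ Sum.inl 3 := fun h => absurd (Sum.inl.inj h) (by decide)
  have ne04 : (Sum.inl 0 : Fin 5 ⊕ Fin s ⊕ Fin t) ≠ Sum.inl 4 := fun h => absurd (Sum.inl.inj h) (by decide)
  have ne13 : (Sum.inl 1 : Fin 5 ⊕ Fin s ⊕ Fin t) ≠ Sum.inl 3 := fun h => absurd (Sum.inl.inj h) (by decide)
  have ne14 : (Sum.inl 1 : Fin 5 ⊕ Fin s ⊕ Fin t) ≠ Sum.inl 4 := fun h => absurd (Sum.inl.inj h) (by decide)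
  have ne23 : (Sum.inl 2 : Fin 5 ⊕ Fin s ⊕ Fin t) ≠ Sum.inl 3 := fun h => absurd (Sum.inl.inj h) (by decide)
  have ne24 : (Sum.inl 2 : Fin 5 ⊕ Fin s ⊕ Fin t) ≠ Sum.inl 4 := fun h => absurd (Sum.inl.inj h) (by decide)
  have hab : G'.Reachable ⟨_, haU⟩ ⟨_, hbU⟩ := by
    by_cases h0 : (Sum.inl 0 : Fin 5 ⊕ Fin s ⊕ Fin t) ∈ W
    · by_cases h1 : (Sum.inl 1 : Fin 5 ⊕ Fin s ⊕ Fin t) ∈ W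
      · have h3 : (Sum.inl 3 : Fin 5 ⊕ Fin s ⊕ Fin t) ∉ W := by
          rcases three (Sum.inl 0) (Sum.inl 1) (Sum.inl 3) ne01 ne03 ne13 with h|h|h
          · exact absurd h0 h
          · exact absurd h1 h
          · exact h
        have h4 : (Sum.inl 4 : Fin 5 ⊕ Fin s ⊕ Fin t) ∉ W := by
          rcases three (Sum.inl 0) (Sum.inl 1) (Sum.inl 4) ne01 ne04 ne14 with h|h|h
          · exact absurd h0 h
          · exact absurd h1 h
          · exact h
        exact ((step _ ⟨Sum.inl 3, h3⟩ (adjS a 3 (by simp))).trans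
          (step _ ⟨Sum.inl 4, h4⟩ adj34)).trans
          (step _ ⟨_, hbU⟩ (adjT b 4 (by simp)).symm)
      · by_cases h2 : (Sum.inl 2 : Fin 5 ⊕ Fin s ⊕ Fin t) ∈ W
        · have h3 : (Sum.inl 3 : Fin 5 ⊕ Fin s ⊕ Fin t) ∉ W := by
            rcases three (Sum.inl 0) (Sum.inl 2) (Sum.inl 3) ne02 ne03 ne23 with h|h|h
            · exact absurd h0 h
            · exact absurd h2 h
            · exact h
          have h4 : (Sum.inl 4 : Fin 5 ⊕ Fin s ⊕ Fin t) ∉ W := by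
            rcases three (Sum.inl 0) (Sum.inl 2) (Sum.inl 4) ne02 ne04 ne24 with h|h|h
            · exact absurd h0 h
            · exact absurd h2 h
            · exact h
          exact ((step _ ⟨Sum.inl 3, h3⟩ (adjS a 3 (by simp))).trans
            (step _ ⟨Sum.inl 4, h4⟩ adj34)).trans
            (step _ ⟨_, hbU⟩ (adjT b 4 (by simp)).symm)
        · exact ((step _ ⟨Sum.inl 1, h1⟩ (adjS a 1 (by simp))).trans
            (step _ ⟨Sum.inl 2, h2⟩ adj12)).trans
            (step _ ⟨_, hbU⟩ (adjT b 2 (by simp)).symm)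
    · exact (step _ ⟨Sum.inl 0, h0⟩ (adjS a 0 (by simp))).trans
        (step _ ⟨_, hbU⟩ (adjT b 0 (by simp)).symm)
  have reach : ∀ x : U, G'.Reachable x ⟨_, haU⟩ := by
    rintro ⟨x, hx⟩
    match x with
    | Sum.inl 0 => exact step _ _ (adjS a 0 (by simp)).symm
    | Sum.inl 1 => exact step _ _ (adjS a 1 (by simp)).symm
    | Sum.inl 2 => exact (step ⟨_, hx⟩ ⟨_, hbU⟩ (adjT b 2 (by simp)).symm).trans hab.symm
    | Sum.inl 3 => exact step _ _ (adjS a 3 (by simp)).symm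
    | Sum.inl 4 => exact (step ⟨_, hx⟩ ⟨_, hbU⟩ (adjT b 4 (by simp)).symm).trans hab.symm
    | Sum.inr (Sum.inl i) =>
        rcases three (Sum.inl 0) (Sum.inl 1) (Sum.inl 3) ne01 ne03 ne13 with h|h|h
        · exact (step ⟨_, hx⟩ ⟨Sum.inl 0, h⟩ (adjS i 0 (by simp))).trans
            (step _ _ (adjS a 0 (by simp)).symm)
        · exact (step ⟨_, hx⟩ ⟨Sum.inl 1, h⟩ (adjS i 1 (by simp))).trans
            (step _ _ (adjS a 1 (by simp)).symm)
        · exact (step ⟨_, hx⟩ ⟨Sum.inl 3, h⟩ (adjS i 3 (by simp))).trans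
            (step _ _ (adjS a 3 (by simp)).symm)
    | Sum.inr (Sum.inr j) =>
        rcases three (Sum.inl 0) (Sum.inl 2) (Sum.inl 4) ne02 ne04 ne24 with h|h|h
        · exact ((step ⟨_, hx⟩ ⟨Sum.inl 0, h⟩ (adjT j 0 (by simp))).trans
            (step _ ⟨_, hbU⟩ (adjT b 0 (by simp)).symm)).trans hab.symm
        · exact ((step ⟨_, hx⟩ ⟨Sum.inl 2, h⟩ (adjT j 2 (by simp))).trans
            (step _ ⟨_, hbU⟩ (adjT b 2 (by simp)).symm)).trans hab.symm
        · exact ((step ⟨_, hx⟩ ⟨Sum.inl 4, h⟩ (adjT j 4 (by simp))).trans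
            (step _ ⟨_, hbU⟩ (adjT b 4 (by simp)).symm)).trans hab.symm
  haveI : Nonempty U := ⟨⟨_, haU⟩⟩
  exact SimpleGraph.Connected.mk fun x y => (reach x).trans (reach y).symm
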